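/- The number a_{3,2}(n) of compositions (c_1,...,c_m) of n with 3·c_{2i-1} > 2·c_{2i} for all i with 2i ≤ m equals the number of compositions of n into parts congruent to 1, 2, or 4 modulo 5. -/

import Mathlib

/-- `l` is a composition of `n`: a list of positive integers summing to `n`. -/
def IsComposition (n : ℕ) (l : List ℕ) : Prop := (∀ x ∈ l, 0 < x) ∧ l.sum = n

instance (n : ℕ) : DecidablePred (IsComposition n) := fun l => by
  unfold IsComposition; infer_instance

/-- finset of all compositions of n -/
def comps : ℕ → Finset (List ℕ)
  | 0 => {[]}
  | (n+1) => (Finset.Icc 1 (n+1)).attach.biUnion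
      (fun k => (comps (n + 1 - k.1)).image (k.1 :: ·))
  decreasing_by
    have := (Finset.mem_Icc.mp k.2).1
    omega

lemma mem_comps (n : ℕ) (l : List ℕ) : l ∈ comps n ↔ IsComposition n l := by
  induction n using Nat.strong_induction_on generalizing l with
  | _ n ih =>
    match n with
    | 0 =>
      simp only [comps, Finset.mem_singleton, IsComposition]
      constructor
      · rintro rfl; simp
      · rintro ⟨h1, h2⟩
        cases l with
        | nil => rfl
        | cons a t =>
          exfalso
          have := h1 a (by simp)
          simp at h2; omega
    | (n+1) =>
      simp only [comps, Finset.mem_biUnion, Finset.mem_attach, Finset.mem_image, true_and,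
        Subtype.exists]
      constructor
      · rintro ⟨k, hk, t, ht, rfl⟩
        have hk' := Finset.mem_Icc.mp hk
        have ht' := (ih (n + 1 - k) (by omega) t).mp ht
        refine ⟨?_, ?_⟩
        · intro x hx
          rcases List.mem_cons.mp hx with rfl | hx
          · omega
          · exact ht'.1 x hx
        · simp [ht'.2]; omega
      · rintro ⟨h1, h2⟩
        cases l with
        | nil => simp at h2
        | cons a t =>
          have ha : 0 < a := h1 a (by simp)
          simp only [List.sum_cons] at h2
          refine ⟨a, Finset.mem_Icc.mpr ⟨ha, by omega⟩, t, ?_, rfl⟩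
          exact (ih (n + 1 - a) (by omega) t).mpr ⟨fun x hx => h1 x (by simp [hx]), by omega⟩

lemma card_filter_comps (n : ℕ) (hn : 0 < n) (P : List ℕ → Prop) [DecidablePred P] :
    ((comps n).filter P).card
      = ∑ k ∈ Finset.Icc 1 n, ((comps (n - k)).filter (fun t => P (k :: t))).card := by
  obtain ⟨m, rfl⟩ : ∃ m, n = m + 1 := ⟨n - 1, by omega⟩
  rw [comps]
  rw [Finset.filter_biUnion, Finset.card_biUnion]
  · rw [← Finset.sum_attach (Finset.Icc 1 (m+1))
      (fun k => ((comps (m + 1 - k)).filter (fun t => P (k :: t))).card)]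
    refine Finset.sum_congr rfl fun k _ => ?_
    rw [Finset.filter_image, Finset.card_image_of_injective]
    intro a b hab
    exact (List.cons.injEq _ _ _ _ ▸ hab).2
  · intro x _ y _ hxy
    simp only [Finset.disjoint_left]
    intro l hl hl'
    simp only [Finset.mem_filter, Finset.mem_image] at hl hl'
    obtain ⟨⟨t, _, rfl⟩, _⟩ := hl
    obtain ⟨⟨t', _, heq⟩, _⟩ := hl'
    apply hxy
    exact Subtype.ext (List.cons.injEq _ _ _ _ ▸ heq).1.symm

/-- The scaled Arndt condition: `s * c_{2i-1} > t * c_{2i}` for each pair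
(0-indexed: `s * l[2i] > t * l[2i+1]`). -/
def ArndtCond (s t : ℕ) (l : List ℕ) : Prop :=
  ∀ i : ℕ, 2 * i + 1 < l.length → t * l[2 * i + 1]! < s * l[2 * i]!

lemma arndt_nil (s t : ℕ) : ArndtCond s t [] := by
  intro i hi; simp at hi

lemma arndt_single (s t a : ℕ) : ArndtCond s t [a] := by
  intro i hi; simp at hi

lemma arndt_cons_cons (s t a b : ℕ) (l : List ℕ) :
    ArndtCond s t (a :: b :: l) ↔ t * b < s * a ∧ ArndtCond s t l := by
  constructor
  · intro h
    refine ⟨by have := h 0 (by simp); norm_num at this; exact this, ?_⟩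
    intro i hi
    have := h (i + 1) (by simp only [List.length_cons] at hi ⊢; omega)
    have e1 : 2 * (i + 1) + 1 = (2 * i + 1) + 1 + 1 := by ring
    have e2 : 2 * (i + 1) = (2 * i) + 1 + 1 := by ring
    rw [e1, e2, List.getElem!_cons_succ, List.getElem!_cons_succ,
      List.getElem!_cons_succ, List.getElem!_cons_succ] at this
    exact this
  · rintro ⟨hab, h⟩ i hi
    match i with
    | 0 => simpa using hab
    | (j+1) =>
      have e1 : 2 * (j + 1) + 1 = (2 * j + 1) + 1 + 1 := by ring
      have e2 : 2 * (j + 1) = (2 * j) + 1 + 1 := by ring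
      rw [e1, e2, List.getElem!_cons_succ, List.getElem!_cons_succ,
        List.getElem!_cons_succ, List.getElem!_cons_succ]
      apply h
      simp only [List.length_cons] at hi ⊢; omega

instance (s t : ℕ) : DecidablePred (ArndtCond s t) := fun l =>
  decidable_of_iff (∀ i ∈ Finset.range l.length, 2 * i + 1 < l.length →
      t * l[2 * i + 1]! < s * l[2 * i]!) <| by
    unfold ArndtCond
    constructor
    · intro h i hi
      exact h i (Finset.mem_range.mpr (by omega)) hi
    · intro h i _ hi
      exact h i hi

/-- `a_{s,t}(n)`: the number of scaled Arndt compositions of `n`. -/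
noncomputable def arndtCount (s t n : ℕ) : ℕ :=
  Nat.card {l : List ℕ // IsComposition n l ∧ ArndtCond s t l}

/-- Number of compositions of `n` with all parts in the set `A`. -/
noncomputable def compCount (A : Set ℕ) (n : ℕ) : ℕ :=
  Nat.card {l : List ℕ // IsComposition n l ∧ ∀ x ∈ l, x ∈ A}

lemma count_eq_filter (n : ℕ) (Q : List ℕ → Prop) [DecidablePred Q] :
    Nat.card {l : List ℕ // IsComposition n l ∧ Q l}
      = ((comps n).filter (fun l => IsComposition n l ∧ Q l)).card := by
  have h1 : {l : List ℕ | IsComposition n l ∧ Q l}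
      = ↑((comps n).filter (fun l => IsComposition n l ∧ Q l)) := by
    ext l
    simp [mem_comps, and_assoc]
  have h2 : Nat.card {l : List ℕ // IsComposition n l ∧ Q l}
      = Set.ncard {l : List ℕ | IsComposition n l ∧ Q l} :=
    Nat.card_coe_set_eq _
  rw [h2, h1, Set.ncard_coe_finset]

lemma filter_isComp (n : ℕ) (Q : List ℕ → Prop) [DecidablePred Q] :
    ((comps n).filter (fun l => IsComposition n l ∧ Q l))
      = ((comps n).filter Q) := by
  apply Finset.filter_congr
  intro l hl
  simp [(mem_comps n l).mp hl]

lemma count_eq_filter' (n : ℕ) (Q : List ℕ → Prop) [DecidablePred Q] :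
    Nat.card {l : List ℕ // IsComposition n l ∧ Q l} = ((comps n).filter Q).card := by
  rw [count_eq_filter, filter_isComp]

/-- number of valid first parts `j` of a pair summing to `k` -/
def G (k : ℕ) : ℕ := ((Finset.range k).filter (fun j => 2 * k < 5 * j)).card

def inA (x : ℕ) : Prop := x % 5 = 1 ∨ x % 5 = 2 ∨ x % 5 = 4

instance : DecidablePred inA := fun x => by unfold inA; infer_instance

lemma G_eq (k : ℕ) (hk : 1 ≤ k) : G k = k - (2 * k / 5 + 1) := by
  have : (Finset.range k).filter (fun j => 2 * k < 5 * j) = Finset.Ico (2 * k / 5 + 1) k := by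
    ext j
    simp only [Finset.mem_filter, Finset.mem_range, Finset.mem_Ico]
    omega
  rw [G, this, Nat.card_Ico]

lemma G_zero : G 0 = 0 := by simp [G]

lemma G_one : G 1 = 0 := by rw [G_eq 1 le_rfl]

lemma G_step (k : ℕ) (hk : 2 ≤ k) :
    G k = G (k - 1) + (if inA k then 1 else 0) := by
  rw [G_eq k (by omega), G_eq (k - 1) (by omega)]
  rcases Classical.em (inA k) with h | h
  · rw [if_pos h]
    unfold inA at h
    omega
  · rw [if_neg h]
    unfold inA at h
    push_neg at h
    omega

def aN (n : ℕ) : ℕ := ((comps n).filter (ArndtCond 3 2)).card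
def bN (n : ℕ) : ℕ := ((comps n).filter (fun l => ∀ x ∈ l, inA x)).card

lemma comps_zero : comps 0 = {[]} := by rw [comps]

lemma aN_zero : aN 0 = 1 := by
  rw [aN, comps_zero, Finset.filter_singleton, if_pos (arndt_nil 3 2)]
  rfl

lemma bN_zero : bN 0 = 1 := by
  rw [bN, comps_zero, Finset.filter_singleton, if_pos (by simp)]
  rfl

lemma bN_rec (n : ℕ) (hn : 0 < n) :
    bN n = ∑ i ∈ Finset.range n, (if inA (n - i) then 1 else 0) * bN i := by
  rw [bN]
  refine (card_filter_comps n hn (fun l => ∀ x ∈ l, inA x)).trans ?_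
  refine Finset.sum_nbij' (i := fun k => n - k) (j := fun i => n - i) ?_ ?_ ?_ ?_ ?_
  · intro k hk; simp only [Finset.mem_Icc] at hk; simp only [Finset.mem_range]; omega
  · intro i hi; simp only [Finset.mem_range] at hi; simp only [Finset.mem_Icc]; omega
  · intro k hk; simp only [Finset.mem_Icc] at hk; omega
  · intro i hi; simp only [Finset.mem_range] at hi; omega
  · intro k hk
    simp only [Finset.mem_Icc] at hk
    have hnk : n - (n - k) = k := by omega
    rw [hnk]
    have h1 : (comps (n - k)).filter (fun t => ∀ x ∈ (k :: t), inA x)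
        = (comps (n - k)).filter (fun t => inA k ∧ ∀ x ∈ t, inA x) := by
      apply Finset.filter_congr; intro t _; simp [List.forall_mem_cons]
    rw [h1]
    rcases Classical.em (inA k) with h | h
    · rw [if_pos h, one_mul, bN]
      congr 1
      apply Finset.filter_congr; intro t _; simp [h]
    · rw [if_neg h, zero_mul, Finset.card_eq_zero]
      apply Finset.filter_false_of_mem
      intro t _ ht
      exact h ht.1

lemma c_zero (k : ℕ) : ((comps 0).filter (fun t => ArndtCond 3 2 (k :: t))).card = 1 := by
  rw [comps_zero, Finset.filter_singleton, if_pos (arndt_single 3 2 k)]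
  rfl

lemma c_inner (k m : ℕ) (hm : 0 < m) :
    ((comps m).filter (fun t => ArndtCond 3 2 (k :: t))).card
      = ∑ b ∈ Finset.Icc 1 m, (if 2 * b < 3 * k then 1 else 0) * aN (m - b) := by
  refine (card_filter_comps m hm (fun t => ArndtCond 3 2 (k :: t))).trans ?_
  refine Finset.sum_congr rfl fun b _ => ?_
  have h1 : (comps (m - b)).filter (fun t => ArndtCond 3 2 (k :: b :: t))
      = (comps (m - b)).filter (fun t => 2 * b < 3 * k ∧ ArndtCond 3 2 t) := by
    apply Finset.filter_congr; intro t _; simpa using arndt_cons_cons 3 2 k b t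
  rw [h1]
  rcases Classical.em (2 * b < 3 * k) with h | h
  · rw [if_pos h, one_mul, aN]
    congr 1
    apply Finset.filter_congr; intro t _; simp [h]
  · rw [if_neg h, zero_mul, Finset.card_eq_zero]
    apply Finset.filter_false_of_mem
    intro t _ ht
    exact h ht.1

lemma inner_swap (n k : ℕ) (hk : 1 ≤ k) (hkn : k ≤ n) :
    ∑ b ∈ Finset.Icc 1 (n - k), (if 2 * b < 3 * k then 1 else 0) * aN (n - k - b)
      = ∑ i ∈ Finset.range n,
          (if (i < n - k ∧ 2 * (n - k - i) < 3 * k) then 1 else 0) * aN i := by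
  have h1 : ∑ b ∈ Finset.Icc 1 (n - k), (if 2 * b < 3 * k then 1 else 0) * aN (n - k - b)
      = ∑ i ∈ Finset.range (n - k),
          (if (i < n - k ∧ 2 * (n - k - i) < 3 * k) then 1 else 0) * aN i := by
    refine Finset.sum_nbij' (i := fun b => n - k - b) (j := fun i => n - k - i) ?_ ?_ ?_ ?_ ?_
    · intro b hb; simp only [Finset.mem_Icc] at hb; simp only [Finset.mem_range]; omega
    · intro i hi; simp only [Finset.mem_range] at hi; simp only [Finset.mem_Icc]; omega
    · intro b hb; simp only [Finset.mem_Icc] at hb; omega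
    · intro i hi; simp only [Finset.mem_range] at hi; omega
    · intro b hb
      simp only [Finset.mem_Icc] at hb
      congr 1
      refine if_congr ?_ rfl rfl
      constructor
      · intro h; refine ⟨by omega, by omega⟩
      · rintro ⟨h1, h2⟩; omega
  rw [h1]
  refine Finset.sum_subset (Finset.range_subset_range.mpr (by omega)) ?_
  intro i hi hni
  simp only [Finset.mem_range] at hi hni
  rw [if_neg (by omega), zero_mul]

lemma aN_rec (n : ℕ) (hn : 0 < n) :
    aN n = 1 + ∑ i ∈ Finset.range n, G (n - i) * aN i := by
  obtain ⟨m, rfl⟩ : ∃ m, n = m + 1 := ⟨n - 1, by omega⟩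
  rw [aN]
  refine (card_filter_comps (m + 1) hn (ArndtCond 3 2)).trans ?_
  rw [Finset.sum_Icc_succ_top (by omega)]
  rw [show m + 1 - (m + 1) = 0 from by omega, c_zero, add_comm, Nat.add_left_cancel_iff]
  have hstep : ∀ k ∈ Finset.Icc 1 m,
      ((comps (m + 1 - k)).filter (fun t => ArndtCond 3 2 (k :: t))).card
        = ∑ i ∈ Finset.range (m + 1),
            (if (i < m + 1 - k ∧ 2 * (m + 1 - k - i) < 3 * k) then 1 else 0) * aN i := by
    intro k hk
    simp only [Finset.mem_Icc] at hk
    rw [c_inner k (m + 1 - k) (by omega), inner_swap (m + 1) k (by omega) (by omega)]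
  rw [Finset.sum_congr rfl hstep, Finset.sum_comm]
  refine Finset.sum_congr rfl fun i hi => ?_
  simp only [Finset.mem_range] at hi
  rw [← Finset.sum_mul, ← Finset.card_filter]
  congr 1
  have : Finset.filter (fun k => i < m + 1 - k ∧ 2 * (m + 1 - k - i) < 3 * k) (Finset.Icc 1 m)
      = Finset.filter (fun j => 2 * (m + 1 - i) < 5 * j) (Finset.range (m + 1 - i)) := by
    ext j
    simp only [Finset.mem_filter, Finset.mem_Icc, Finset.mem_range]
    omega
  rw [this, G]

lemma key (n : ℕ) : aN n = bN n := by
  induction n using Nat.strong_induction_on with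
  | _ n ih =>
    rcases Nat.eq_zero_or_pos n with rfl | hn
    · rw [aN_zero, bN_zero]
    · -- abbreviations
      have hbn1 : bN (n - 1) = 1 + ∑ i ∈ Finset.range (n - 1), G (n - 1 - i) * bN i := by
        rcases Nat.eq_zero_or_pos (n - 1) with h0 | hpos
        · rw [h0, bN_zero]; simp
        · rw [← ih (n - 1) (by omega), aN_rec (n - 1) hpos]
          congr 1
          refine Finset.sum_congr rfl fun i hi => ?_
          simp only [Finset.mem_range] at hi
          rw [ih i (by omega)]
      have claim1 : (∑ i ∈ Finset.range n, (if inA (n - i) then 1 else 0) * bN i)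
            + ∑ i ∈ Finset.range n, G (n - 1 - i) * bN i
          = bN (n - 1) + ∑ i ∈ Finset.range n, G (n - i) * bN i := by
        rw [← Finset.sum_add_distrib]
        obtain ⟨m, rfl⟩ : ∃ m, n = m + 1 := ⟨n - 1, by omega⟩
        rw [Finset.sum_range_succ, Finset.sum_range_succ
          (fun i => G (m + 1 - i) * bN i)]
        have hlast1 : ((if inA (m + 1 - m) then 1 else 0) * bN m + G (m + 1 - 1 - m) * bN m)
            = bN m := by
          rw [show m + 1 - m = 1 from by omega, show m + 1 - 1 - m = 0 from by omega, G_zero]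
          have : inA 1 := by unfold inA; omega
          rw [if_pos this]; ring
        have hlast2 : G (m + 1 - m) * bN m = 0 := by
          rw [show m + 1 - m = 1 from by omega, G_one, zero_mul]
        rw [hlast1, hlast2, add_zero]
        rw [show m + 1 - 1 = m from by omega]
        have hmain : ∀ i ∈ Finset.range m,
            ((if inA (m + 1 - i) then 1 else 0) * bN i + G (m - i) * bN i)
              = G (m + 1 - i) * bN i := by
          intro i hi
          simp only [Finset.mem_range] at hi
          rw [← add_mul]
          congr 1
          rw [G_step (m + 1 - i) (by omega), show m + 1 - i - 1 = m - i from by omega]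
          ring
        rw [Finset.sum_congr rfl hmain]
        ring
      have claim2 : ∑ i ∈ Finset.range n, G (n - 1 - i) * bN i
          = ∑ i ∈ Finset.range (n - 1), G (n - 1 - i) * bN i := by
        obtain ⟨m, rfl⟩ : ∃ m, n = m + 1 := ⟨n - 1, by omega⟩
        rw [Finset.sum_range_succ, show m + 1 - 1 = m from by omega, Nat.sub_self, G_zero,
          zero_mul, add_zero]
      rw [aN_rec n hn, bN_rec n hn]
      have hA : ∑ i ∈ Finset.range n, G (n - i) * aN i
          = ∑ i ∈ Finset.range n, G (n - i) * bN i := by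
        refine Finset.sum_congr rfl fun i hi => ?_
        simp only [Finset.mem_range] at hi
        rw [ih i hi]
      rw [hA]
      have := claim1
      rw [claim2, hbn1] at this
      omega

theorem arndt_3_2_eq (n : ℕ) :
    arndtCount 3 2 n = compCount {x : ℕ | x % 5 = 1 ∨ x % 5 = 2 ∨ x % 5 = 4} n := by
  have h1 : arndtCount 3 2 n = aN n := by
    rw [aN]
    exact count_eq_filter' n (ArndtCond 3 2)
  have h2 : compCount {x : ℕ | x % 5 = 1 ∨ x % 5 = 2 ∨ x % 5 = 4} n = bN n := by
    rw [bN]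
    exact count_eq_filter' n (fun l => ∀ x ∈ l, inA x)
  rw [h1, h2, key n]
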